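/- arXiv:1811.12863 — 3 statements merged into one kernel-verified Lean document; each statement's English description precedes it below -/
import Mathlib

section
/- For every real x in the open interval (-1,1) and every real polynomial p of degree at most n, the derivative satisfies |p'(x)| ≤ (n / sqrt(1 - x^2)) · sup_{t ∈ [-1,1]} |p(t)|. -/
open Polynomial Finset Real Polynomial.Chebyshev
open scoped Real

namespace Bern




noncomputable def u (N k : ℕ) : ℝ := (2 * k + 1) * π / (2 * N)

lemma sin_u_half_pos {N : ℕ} (hN : 0 < N) {k : ℕ} (hk : k < 2 * N) :
    0 < Real.sin (u N k / 2) := by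
  apply Real.sin_pos_of_pos_of_lt_pi
  · have : (0:ℝ) < (2 * k + 1) * π := by positivity
    have h2 : (0:ℝ) < 2 * N := by positivity
    unfold u; positivity
  · unfold u
    rw [div_div, div_lt_iff₀ (by positivity)]
    have hπ := Real.pi_pos
    have : (2 * (k:ℝ) + 1) < 2 * N * 2 := by
      have : (k : ℝ) ≤ 2 * N - 1 := by
        have : (k:ℝ) + 1 ≤ 2 * N := by exact_mod_cast hk
        linarith
      linarith
    nlinarith

lemma u_reflect {N : ℕ} (hN : 0 < N) {k : ℕ} (hk : k < 2 * N) :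
    u N (2 * N - 1 - k) = 2 * π - u N k := by
  unfold u
  have h1 : ((2 * N - 1 - k : ℕ) : ℝ) = 2 * N - 1 - k := by
    have : k + 1 ≤ 2 * N := hk
    push_cast [Nat.cast_sub (by omega : k ≤ 2*N-1), Nat.cast_sub (by omega : 1 ≤ 2*N)]
    ring
  rw [h1]
  have h2 : (0:ℝ) < 2 * N := by positivity
  field_simp
  ring







lemma cos_eq_one_sub (x : ℝ) : Real.cos x = 1 - 2 * Real.sin (x/2)^2 := by
  have h1 := Real.sin_sq_add_cos_sq (x/2)
  have h2 : Real.cos x = Real.cos (x/2)^2 - Real.sin (x/2)^2 := by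
    rw [← Real.cos_two_mul']; congr 1; ring
  linarith

lemma exp_pi_div_two : Complex.exp ((π/2 : ℝ) * Complex.I) = Complex.I := by
  rw [Complex.exp_mul_I]
  have h1 : ((π/2 : ℝ) : ℂ) = ((π/2 : ℝ) : ℂ) := rfl
  rw [show Complex.cos ((π/2:ℝ):ℂ) = ((Real.cos (π/2) : ℝ) : ℂ) from (Complex.ofReal_cos _).symm,
    show Complex.sin ((π/2:ℝ):ℂ) = ((Real.sin (π/2) : ℝ) : ℂ) from (Complex.ofReal_sin _).symm]
  simp

noncomputable def GB (N m : ℕ) : ℝ := ∑ k ∈ range (2*N), (-1:ℝ)^k * Real.sin (m * u N k)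

lemma g_zero {N m : ℕ} (hN : 0 < N) (hm : m < N) :
    ∑ k ∈ range (2*N), (-1:ℂ)^k * Complex.exp ((m * u N k : ℝ) * Complex.I) = 0 := by
  have hNr : ((N:ℝ)) ≠ 0 := by positivity
  have hNc : ((N:ℂ)) ≠ 0 := by exact_mod_cast Nat.cast_ne_zero.mpr hN.ne'
  set r : ℂ := -Complex.exp ((m * π / N : ℝ) * Complex.I) with hr
  have hterm : ∀ k ∈ range (2*N), (-1:ℂ)^k * Complex.exp ((m * u N k : ℝ) * Complex.I)
      = Complex.exp ((m * π / (2*N) : ℝ) * Complex.I) * r ^ k := by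
    intro k _
    have h : (m * u N k : ℝ) = k * (m * π / N) + m * π / (2*N) := by
      unfold u; field_simp
    rw [h, hr, neg_pow]
    push_cast
    rw [add_mul, Complex.exp_add,
      show ((k:ℂ) * ((m:ℂ) * (π:ℂ) / N)) * Complex.I = k * (((m:ℂ) * (π:ℂ) / N) * Complex.I) by
        ring,
      Complex.exp_nat_mul]
    ring
  have hr1 : r ≠ 1 := by
    intro hcon
    have h2 : Complex.exp ((m * π / N : ℝ) * Complex.I) = -1 := by
      rw [hr] at hcon
      linear_combination -hcon
    have h3 := congrArg Complex.re h2
    rw [Complex.exp_ofReal_mul_I_re] at h3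
    norm_num at h3
    have ht0 : (0:ℝ) ≤ m * π / N := by positivity
    have htπ : m * π / N < π := by
      rw [div_lt_iff₀ (by positivity)]
      have : (m:ℝ) < N := by exact_mod_cast hm
      nlinarith [Real.pi_pos]
    have := Real.strictAntiOn_cos ⟨ht0, le_of_lt htπ⟩
      ⟨le_of_lt Real.pi_pos, le_refl π⟩ htπ
    rw [Real.cos_pi, h3] at this
    exact lt_irrefl _ this
  have hr2N : r ^ (2*N) = 1 := by
    rw [hr, neg_pow, ← Complex.exp_nat_mul]
    have h4 : ((2*N : ℕ):ℂ) * (((m * π / N : ℝ):ℂ) * Complex.I) = (m:ℤ) * (2 * π * Complex.I) := by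
      push_cast
      field_simp
    rw [h4, Complex.exp_int_mul_two_pi_mul_I]
    simp [pow_mul]
  rw [Finset.sum_congr rfl hterm, ← Finset.mul_sum, geom_sum_eq hr1, hr2N]
  simp

lemma g_N {N : ℕ} (hN : 0 < N) :
    ∑ k ∈ range (2*N), (-1:ℂ)^k * Complex.exp (((N:ℝ) * u N k : ℝ) * Complex.I)
      = 2 * N * Complex.I := by
  have hNr : ((N:ℝ)) ≠ 0 := by positivity
  have hterm : ∀ k ∈ range (2*N), (-1:ℂ)^k * Complex.exp (((N:ℝ) * u N k : ℝ) * Complex.I)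
      = Complex.I := by
    intro k _
    have h : ((N:ℝ) * u N k : ℝ) = k * π + π/2 := by
      unfold u; field_simp
    rw [h]
    push_cast
    rw [add_mul, Complex.exp_add,
      show ((k:ℂ) * (π:ℂ)) * Complex.I = k * ((π:ℂ) * Complex.I) by ring,
      Complex.exp_nat_mul, Complex.exp_pi_mul_I,
      show ((π:ℂ)/2) * Complex.I = ((π/2 : ℝ):ℂ) * Complex.I by push_cast; ring,
      exp_pi_div_two]
    have hkk : (-1:ℂ)^k * (-1:ℂ)^k = 1 := by
      rw [← pow_add, ← two_mul, pow_mul]; norm_num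
    rw [← mul_assoc, hkk, one_mul]
  rw [Finset.sum_congr rfl hterm, Finset.sum_const, Finset.card_range]
  push_cast
  ring









lemma im_sum (N : ℕ) (x : ℕ → ℝ) :
    (∑ k ∈ range (2*N), (-1:ℂ)^k * Complex.exp ((x k : ℝ) * Complex.I)).im
      = ∑ k ∈ range (2*N), (-1:ℝ)^k * Real.sin (x k) := by
  rw [Complex.im_sum]
  refine Finset.sum_congr rfl fun k _ => ?_
  rw [show ((-1:ℂ))^k = (((-1:ℝ)^k : ℝ):ℂ) by push_cast; ring]
  rw [Complex.im_ofReal_mul, Complex.exp_ofReal_mul_I_im]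

lemma GB_zero {N m : ℕ} (hN : 0 < N) (hm : m < N) : GB N m = 0 := by
  have h := congrArg Complex.im (g_zero hN hm)
  rwa [im_sum N (fun k => m * u N k), Complex.zero_im] at h

lemma GB_N {N : ℕ} (hN : 0 < N) : GB N N = 2 * N := by
  have h := congrArg Complex.im (g_N hN)
  rw [im_sum N (fun k => (N:ℝ) * u N k)] at h
  simpa [GB] using h











noncomputable def A (N m : ℕ) : ℝ :=
  ∑ k ∈ range (2*N), (-1:ℝ)^k * Real.cos (m * u N k) / (Real.sin (u N k / 2))^2
noncomputable def B (N m : ℕ) : ℝ :=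
  ∑ k ∈ range (2*N), (-1:ℝ)^k * Real.sin (m * u N k) / (Real.sin (u N k / 2))^2

lemma A_zero {N : ℕ} (hN : 0 < N) (m : ℕ) : A N m = 0 := by
  have h : A N m = -A N m := by
    conv_lhs => rw [A, ← Finset.sum_range_reflect]
    rw [A, ← Finset.sum_neg_distrib]
    refine Finset.sum_congr rfl fun k hk => ?_
    rw [Finset.mem_range] at hk
    have hk' : 2 * N - 1 - k < 2 * N := by omega
    rw [u_reflect hN hk]
    have h1 : Real.cos ((m:ℝ) * (2 * π - u N k)) = Real.cos ((m:ℝ) * u N k) := by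
      rw [show (m:ℝ) * (2 * π - u N k) = m * (2*π) - m * u N k by ring,
        Real.cos_nat_mul_two_pi_sub]
    have h2 : Real.sin ((2 * π - u N k)/2) = Real.sin (u N k / 2) := by
      rw [show (2 * π - u N k)/2 = π - u N k / 2 by ring, Real.sin_pi_sub]
    have h3 : (-1:ℝ)^(2*N-1-k) = -(-1:ℝ)^k := by
      have h4 : (-1:ℝ)^(2*N-1-k) * (-1:ℝ)^k = -1 := by
        rw [← pow_add, show 2*N-1-k+k = 2*N-1 by omega]
        rw [show 2*N-1 = 2*(N-1)+1 by omega, pow_succ, pow_mul]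
        norm_num
      have h5 : ((-1:ℝ)^k)^2 = 1 := by rw [← pow_mul, pow_mul']; norm_num
      calc (-1:ℝ)^(2*N-1-k) = ((-1:ℝ)^(2*N-1-k) * (-1)^k) * (-1)^k := by
            rw [mul_assoc, ← sq, h5, mul_one]
        _ = -(-1:ℝ)^k := by rw [h4]; ring
    rw [h1, h2, h3]
    ring
  linarith

lemma B_zero (N : ℕ) : B N 0 = 0 := by
  unfold B; simp

lemma B_rec {N : ℕ} (hN : 0 < N) (m : ℕ) :
    B N (m+2) = 2 * B N (m+1) - B N m - 4 * GB N (m+1) := by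
  have key : B N (m+2) + B N m - 2 * B N (m+1) + 4 * GB N (m+1) = 0 := by
    rw [B, B, B, GB, Finset.mul_sum, Finset.mul_sum, ← Finset.sum_add_distrib,
      ← Finset.sum_sub_distrib, ← Finset.sum_add_distrib]
    refine Finset.sum_eq_zero fun k hk => ?_
    rw [Finset.mem_range] at hk
    have hs := sin_u_half_pos hN hk
    have hs2 : (Real.sin (u N k / 2))^2 ≠ 0 := by positivity
    have e1 : ((m:ℝ)+2) * u N k = ((m:ℝ)+1) * u N k + u N k := by ring
    have e2 : (m:ℝ) * u N k = ((m:ℝ)+1) * u N k - u N k := by ring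
    push_cast
    rw [e1, e2, Real.sin_add, Real.sin_sub, cos_eq_one_sub (u N k)]
    field_simp
    ring
  linarith

lemma B_symm {N m : ℕ} (hN : 0 < N) (hm : m ≤ 2*N) : B N (2*N - m) = B N m := by
  unfold B
  refine Finset.sum_congr rfl fun k hk => ?_
  rw [Finset.mem_range] at hk
  congr 1
  congr 1
  have hc : ((2*N - m : ℕ):ℝ) = 2*N - m := by
    push_cast [Nat.cast_sub hm]; ring
  rw [hc]
  have h1 : (2*(N:ℝ) - m) * u N k = (2*k+1) * π - m * u N k := by
    unfold u
    have : ((N:ℝ)) ≠ 0 := by positivity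
    field_simp
  rw [h1, show (2*(k:ℝ)+1) * π - (m:ℝ) * u N k
      = (2*k+1 : ℕ) * π - (m:ℝ) * u N k by push_cast; ring]
  rw [Real.sin_sub, Real.sin_nat_mul_pi]
  have hcc : Real.cos (((2*k+1 : ℕ):ℝ) * π) = -1 := by
    have := Real.cos_nat_mul_pi_sub 0 (2*k+1)
    simp only [sub_zero, Real.cos_zero, mul_one] at this
    rw [this, pow_succ, pow_mul]
    norm_num
  rw [hcc]
  ring


lemma B_linear {N : ℕ} (hN : 0 < N) : ∀ m, m ≤ N → B N m = m * B N 1 := by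
  intro m
  induction m using Nat.strong_induction_on with
  | _ m ih =>
    match m with
    | 0 => intro _; simp [B_zero]
    | 1 => intro _; simp
    | (m+2) =>
      intro hm
      rw [B_rec hN m, GB_zero hN (by omega), ih (m+1) (by omega) (by omega),
        ih m (by omega) (by omega)]
      push_cast
      ring

lemma B_N_val {N : ℕ} (hN : 0 < N) : B N N = B N (N-1) + 4 * N := by
  have h1 : B N (N+1) = 2 * B N N - B N (N-1) - 4 * GB N N := by
    have := B_rec hN (N-1)
    rwa [show N-1+2 = N+1 by omega, show N-1+1 = N by omega] at this
  have h2 : B N (N+1) = B N (N-1) := by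
    have := B_symm hN (show N-1 ≤ 2*N by omega)
    rwa [show 2*N - (N-1) = N+1 by omega] at this
  rw [GB_N hN] at h1
  linarith

lemma B_val {N : ℕ} (hN : 0 < N) {m : ℕ} (hm : m ≤ N) : B N m = 4 * N * m := by
  have hB1 : B N 1 = 4 * N := by
    have h1 := B_linear hN N (le_refl N)
    have h2 := B_linear hN (N-1) (by omega)
    have h3 := B_N_val hN
    rw [h1, h2] at h3
    have hc : ((N-1 : ℕ):ℝ) = (N:ℝ) - 1 := by
      push_cast [Nat.cast_sub (by omega : 1 ≤ N)]; ring
    rw [hc] at h3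
    have hNr : (0:ℝ) < N := by exact_mod_cast hN
    nlinarith
  rw [B_linear hN m hm, hB1]
  ring

lemma sum_inv_sin_sq {N : ℕ} (hN : 0 < N) :
    ∑ k ∈ range (2*N), 1 / (Real.sin (u N k / 2))^2 = 4 * (N:ℝ)^2 := by
  have h := B_val hN (le_refl N)
  rw [B] at h
  have hterm : ∀ k ∈ range (2*N), (-1:ℝ)^k * Real.sin ((N:ℝ) * u N k) / (Real.sin (u N k / 2))^2
      = 1 / (Real.sin (u N k / 2))^2 := by
    intro k hk
    rw [Finset.mem_range] at hk
    have hs : Real.sin ((N:ℝ) * u N k) = (-1:ℝ)^k := by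
      have hNr : ((N:ℝ)) ≠ 0 := by positivity
      have h1 : ((N:ℝ)) * u N k = k * π + π/2 := by
        unfold u; field_simp
      rw [h1, Real.sin_add, Real.sin_nat_mul_pi,
        show Real.cos ((k:ℝ) * π) = (-1:ℝ)^k from ?_]
      · simp
      · have := Real.cos_nat_mul_pi_sub 0 k
        simpa using this
    rw [hs, ← sq, ← pow_mul, pow_mul']
    norm_num
  rw [Finset.sum_congr rfl hterm] at h
  rw [h]
  ring











noncomputable def c (N k : ℕ) : ℝ := (-1:ℝ)^k / (4 * N * (Real.sin (u N k / 2))^2)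

lemma sum_c_cos {N m : ℕ} (hN : 0 < N) : ∑ k ∈ range (2*N), c N k * Real.cos (m * u N k) = 0 := by
  have hNr : ((N:ℝ)) ≠ 0 := by positivity
  have : ∀ k ∈ range (2*N), c N k * Real.cos (m * u N k)
      = ((-1:ℝ)^k * Real.cos (m * u N k) / (Real.sin (u N k / 2))^2) / (4*N) := by
    intro k hk
    rw [Finset.mem_range] at hk
    have hs : (Real.sin (u N k / 2)) ≠ 0 := (sin_u_half_pos hN hk).ne'
    unfold c
    field_simp
  rw [Finset.sum_congr rfl this, ← Finset.sum_div]
  rw [show (∑ k ∈ range (2*N), (-1:ℝ)^k * Real.cos (m * u N k) / (Real.sin (u N k / 2))^2)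
    = A N m from rfl, A_zero hN m]
  simp

lemma sum_c_sin {N m : ℕ} (hN : 0 < N) (hm : m ≤ N) :
    ∑ k ∈ range (2*N), c N k * Real.sin (m * u N k) = m := by
  have hNr : ((N:ℝ)) ≠ 0 := by positivity
  have : ∀ k ∈ range (2*N), c N k * Real.sin (m * u N k)
      = ((-1:ℝ)^k * Real.sin (m * u N k) / (Real.sin (u N k / 2))^2) / (4*N) := by
    intro k hk
    rw [Finset.mem_range] at hk
    have hs : (Real.sin (u N k / 2)) ≠ 0 := (sin_u_half_pos hN hk).ne'
    unfold c
    field_simp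
  rw [Finset.sum_congr rfl this, ← Finset.sum_div]
  rw [show (∑ k ∈ range (2*N), (-1:ℝ)^k * Real.sin (m * u N k) / (Real.sin (u N k / 2))^2)
    = B N m from rfl, B_val hN hm]
  field_simp

lemma sum_abs_c {N : ℕ} (hN : 0 < N) : ∑ k ∈ range (2*N), |c N k| = N := by
  have hNr : (0:ℝ) < (N:ℝ) := by exact_mod_cast hN
  have : ∀ k ∈ range (2*N), |c N k| = (1 / (Real.sin (u N k / 2))^2) / (4*N) := by
    intro k hk
    rw [Finset.mem_range] at hk
    have hs : (0:ℝ) < (Real.sin (u N k / 2))^2 := by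
      have := sin_u_half_pos hN hk; positivity
    unfold c
    rw [abs_div, abs_pow, abs_neg, abs_one, one_pow]
    rw [abs_of_pos (by positivity)]
    field_simp
  rw [Finset.sum_congr rfl this, ← Finset.sum_div, sum_inv_sin_sq hN]
  field_simp








def img (j : ℕ) : Set (Polynomial ℝ) := (fun i : ℕ => T ℝ (i:ℤ)) '' Set.Iic j

lemma X_mul_T_mem {j m : ℕ} (hm : m ≤ j) :
    (X : ℝ[X]) * T ℝ (m:ℤ) ∈ Submodule.span ℝ (img (j+1)) := by
  match m with
  | 0 =>
    have h : (X : ℝ[X]) * T ℝ ((0:ℕ):ℤ) = T ℝ ((1:ℕ):ℤ) := by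
      norm_num [T_zero, T_one]
    rw [h]
    exact Submodule.subset_span ⟨1, by simp, rfl⟩
  | m+1 =>
    have h := T_add_two ℝ (m : ℤ)
    have hsum : (X:ℝ[X]) * T ℝ ((m:ℤ)+1) + X * T ℝ ((m:ℤ)+1) = T ℝ ((m:ℤ)+2) + T ℝ (m:ℤ) := by
      linear_combination -h
    have hX : (X:ℝ[X]) * T ℝ (((m+1:ℕ)):ℤ)
        = (1/2 : ℝ) • (T ℝ ((m:ℤ)+2) + T ℝ (m:ℤ)) := by
      push_cast
      rw [← hsum, ← two_smul ℝ ((X:ℝ[X]) * T ℝ ((m:ℤ)+1)), smul_smul]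
      norm_num
    rw [hX]
    refine Submodule.smul_mem _ _ (Submodule.add_mem _ ?_ ?_)
    · refine Submodule.subset_span ⟨m+2, by simp; omega, by push_cast; ring_nf⟩
    · exact Submodule.subset_span ⟨m, by simp; omega, rfl⟩

lemma pow_mem : ∀ j : ℕ, (X:ℝ[X])^j ∈ Submodule.span ℝ (img j) := by
  intro j
  induction j with
  | zero =>
    have : (X:ℝ[X])^0 = T ℝ ((0:ℕ):ℤ) := by simp [T_zero]
    rw [this]
    exact Submodule.subset_span ⟨0, by simp, rfl⟩
  | succ j ih =>
    rw [pow_succ']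
    refine Submodule.span_induction ?_ ?_ ?_ ?_ ih
    · rintro q ⟨m, hm, rfl⟩
      exact X_mul_T_mem hm
    · simp
    · intro a b _ _ ha hb
      rw [mul_add]
      exact Submodule.add_mem _ ha hb
    · intro r a _ ha
      rw [mul_smul_comm]
      exact Submodule.smul_mem _ _ ha

lemma mem_span_T {N : ℕ} (p : ℝ[X]) (hp : p.natDegree ≤ N) :
    p ∈ Submodule.span ℝ (img N) := by
  rw [p.as_sum_range' (N+1) (by omega)]
  refine Submodule.sum_mem _ fun j hj => ?_
  rw [Finset.mem_range] at hj
  rw [show (monomial j (p.coeff j) : ℝ[X]) = p.coeff j • (X:ℝ[X])^j from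
    (Polynomial.smul_X_eq_monomial).symm]
  refine Submodule.smul_mem _ _ ?_
  have hsub : img j ⊆ img N := Set.image_mono (Set.Iic_subset_Iic.mpr (by omega))
  exact Submodule.span_mono hsub (pow_mem j)


lemma riesz {N : ℕ} (hN : 0 < N) (p : ℝ[X]) (hp : p.natDegree ≤ N) (θ : ℝ) :
    Real.sin θ * (derivative p).eval (Real.cos θ)
      = -(∑ k ∈ range (2*N), c N k * p.eval (Real.cos (θ + u N k))) := by
  have key : ∀ θ : ℝ, Real.sin θ * (derivative p).eval (Real.cos θ)
      = -(∑ k ∈ range (2*N), c N k * p.eval (Real.cos (θ + u N k))) := by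
    refine Submodule.span_induction
      (p := fun q _ => ∀ θ : ℝ, Real.sin θ * (derivative q).eval (Real.cos θ)
        = -(∑ k ∈ range (2*N), c N k * q.eval (Real.cos (θ + u N k))))
      ?_ ?_ ?_ ?_ (mem_span_T p hp)
    · rintro q ⟨m, hm, rfl⟩ θ
      simp only [Set.mem_Iic] at hm
      have hL : Real.sin θ * (derivative (T ℝ (m:ℤ))).eval (Real.cos θ)
          = (m:ℝ) * Real.sin ((m:ℝ) * θ) := by
        calc Real.sin θ * (derivative (T ℝ (m:ℤ))).eval (Real.cos θ)
            = (m:ℝ) * ((U ℝ ((m:ℤ)-1)).eval (Real.cos θ) * Real.sin θ) := by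
              rw [T_derivative_eq_U]
              simp only [eval_mul, Polynomial.eval_intCast]
              push_cast
              ring
          _ = (m:ℝ) * Real.sin (((((m:ℤ)-1 : ℤ):ℝ) + 1) * θ) := by rw [U_real_cos]
          _ = (m:ℝ) * Real.sin ((m:ℝ) * θ) := by push_cast; ring_nf
      rw [hL]
      have hR : ∀ k ∈ range (2*N), c N k * (T ℝ (m:ℤ)).eval (Real.cos (θ + u N k))
          = Real.cos ((m:ℝ)*θ) * (c N k * Real.cos ((m:ℝ) * u N k))
            - Real.sin ((m:ℝ)*θ) * (c N k * Real.sin ((m:ℝ) * u N k)) := by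
        intro k _
        rw [T_real_cos]
        push_cast
        rw [mul_add, Real.cos_add]
        ring
      rw [Finset.sum_congr rfl hR, Finset.sum_sub_distrib, ← Finset.mul_sum, ← Finset.mul_sum,
        sum_c_cos hN, sum_c_sin hN hm]
      ring
    · intro θ
      simp
    · intro q r _ _ hq hr θ
      have h1 := hq θ
      have h2 := hr θ
      have h3 : ∀ k ∈ range (2*N), c N k * (q + r).eval (Real.cos (θ + u N k))
          = c N k * q.eval (Real.cos (θ + u N k)) + c N k * r.eval (Real.cos (θ + u N k)) := by
        intro k _
        rw [eval_add]
        ring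
      rw [derivative_add, eval_add, mul_add, h1, h2, Finset.sum_congr rfl h3,
        Finset.sum_add_distrib]
      ring
    · intro a q _ hq θ
      have h1 := hq θ
      have h3 : ∀ k ∈ range (2*N), c N k * (a • q).eval (Real.cos (θ + u N k))
          = a * (c N k * q.eval (Real.cos (θ + u N k))) := by
        intro k _
        rw [eval_smul, smul_eq_mul]
        ring
      rw [derivative_smul, eval_smul, smul_eq_mul, Finset.sum_congr rfl h3, ← Finset.mul_sum]
      calc Real.sin θ * (a * (derivative q).eval (Real.cos θ))
          = a * (Real.sin θ * (derivative q).eval (Real.cos θ)) := by ring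
        _ = a * -(∑ k ∈ range (2*N), c N k * q.eval (Real.cos (θ + u N k))) := by rw [h1]
        _ = _ := by ring
  exact key θ


end Bern

open Bern in
/-- Classical Bernstein polynomial inequality on `[-1,1]`. -/
theorem bernstein_inequality (n : ℕ) (p : Polynomial ℝ) (hp : p.natDegree ≤ n)
    (x : ℝ) (hx : x ∈ Set.Ioo (-1 : ℝ) 1) :
    |p.derivative.eval x| ≤
      (n / Real.sqrt (1 - x ^ 2)) * sSup ((fun t => |p.eval t|) '' Set.Icc (-1 : ℝ) 1) := by
  obtain ⟨hx1, hx2⟩ := hx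
  set M := sSup ((fun t => |p.eval t|) '' Set.Icc (-1 : ℝ) 1) with hM
  have hbdd : BddAbove ((fun t => |p.eval t|) '' Set.Icc (-1 : ℝ) 1) :=
    (isCompact_Icc.image (p.continuous_aeval.abs)).bddAbove
  have hle : ∀ t, t ∈ Set.Icc (-1:ℝ) 1 → |p.eval t| ≤ M :=
    fun t ht => le_csSup hbdd ⟨t, ht, rfl⟩
  rcases Nat.eq_zero_or_pos n with hn | hn
  · have hp0 : p = C (p.coeff 0) := p.eq_C_of_natDegree_le_zero (hn ▸ hp)
    rw [hp0, derivative_C]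
    simp [hn]
  · set θ := Real.arccos x with hθ
    have hcos : Real.cos θ = x := Real.cos_arccos (by linarith) (by linarith)
    have hsin : Real.sin θ = Real.sqrt (1 - x^2) := by rw [hθ, Real.sin_arccos]
    have hsq : (0:ℝ) < 1 - x^2 := by nlinarith
    have hs : 0 < Real.sqrt (1 - x^2) := Real.sqrt_pos.mpr hsq
    have hid := riesz hn p hp θ
    rw [hcos, hsin] at hid
    have hbound : Real.sqrt (1 - x^2) * |p.derivative.eval x| ≤ n * M := by
      calc Real.sqrt (1 - x^2) * |p.derivative.eval x|
          = |Real.sqrt (1-x^2) * p.derivative.eval x| := by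
            rw [abs_mul, abs_of_pos hs]
        _ = |∑ k ∈ range (2*n), c n k * p.eval (Real.cos (θ + u n k))| := by
            rw [hid, abs_neg]
        _ ≤ ∑ k ∈ range (2*n), |c n k * p.eval (Real.cos (θ + u n k))| :=
            Finset.abs_sum_le_sum_abs _ _
        _ ≤ ∑ k ∈ range (2*n), |c n k| * M := by
            refine Finset.sum_le_sum fun k _ => ?_
            rw [abs_mul]
            exact mul_le_mul_of_nonneg_left
              (hle _ ⟨Real.neg_one_le_cos _, Real.cos_le_one _⟩) (abs_nonneg _)
        _ = n * M := by rw [← Finset.sum_mul, sum_abs_c hn]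
    rw [div_mul_eq_mul_div, le_div_iff₀ hs]
    calc |p.derivative.eval x| * Real.sqrt (1-x^2)
        = Real.sqrt (1-x^2) * |p.derivative.eval x| := by ring
      _ ≤ n * M := hbound
end

section
/- For every l > 0, the quantity c(l) := (1/(π² √(1+l²))) · ∫_{1}^{√(1+l²)} arccos(1/r) dr is strictly positive, and moreover ∫_{1}^{√(1+l²)} dr/(r(π - arccos(1/r))) - (1/π) log √(1+l²) ≥ c(l). -/
open Real

/-- For every `l > 0`, `c(l) > 0` and the module lower bound
`∫_1^{√(1+l²)} dr/(r(π - arccos(1/r))) - (1/π) log √(1+l²) ≥ c(l)` holds. -/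
theorem module_lower_bound (l : ℝ) (hl : 0 < l) :
    0 < (1 / (π ^ 2 * Real.sqrt (1 + l ^ 2))) *
        (∫ r in (1 : ℝ)..Real.sqrt (1 + l ^ 2), Real.arccos (1 / r)) ∧
    (∫ r in (1 : ℝ)..Real.sqrt (1 + l ^ 2), 1 / (r * (π - Real.arccos (1 / r)))) -
        (1 / π) * Real.log (Real.sqrt (1 + l ^ 2)) ≥
      (1 / (π ^ 2 * Real.sqrt (1 + l ^ 2))) *
        (∫ r in (1 : ℝ)..Real.sqrt (1 + l ^ 2), Real.arccos (1 / r)) := by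
  set R := Real.sqrt (1 + l ^ 2) with hRdef
  have h1R : 1 < R := by
    have : Real.sqrt 1 < Real.sqrt (1 + l ^ 2) :=
      Real.sqrt_lt_sqrt (by norm_num) (by nlinarith)
    simpa using this
  have hR0 : (0:ℝ) < R := lt_trans one_pos h1R
  have hπ := Real.pi_pos
  -- continuity / integrability of arccos (1/r)
  have hcontA : ContinuousOn (fun r : ℝ => Real.arccos (1 / r)) (Set.Icc 1 R) := by
    apply Real.continuous_arccos.comp_continuousOn
    exact continuousOn_const.div continuousOn_id
      (fun x hx => ne_of_gt (lt_of_lt_of_le one_pos hx.1))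
  have hIntA : IntervalIntegrable (fun r : ℝ => Real.arccos (1 / r))
      MeasureTheory.volume 1 R :=
    hcontA.intervalIntegrable_of_Icc h1R.le
  -- pointwise facts
  have hbounds : ∀ r ∈ Set.Icc (1:ℝ) R, 0 ≤ Real.arccos (1 / r) ∧
      Real.arccos (1 / r) ≤ π / 2 ∧ (0:ℝ) < r := by
    intro r hr
    have hr1 : (1:ℝ) ≤ r := hr.1
    have hr0 : (0:ℝ) < r := by linarith
    refine ⟨Real.arccos_nonneg _, ?_, hr0⟩
    have : (0:ℝ) ≤ 1 / r := by positivity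
    exact (Real.arccos_le_pi_div_two).2 this
  -- continuity of the main integrand
  have hcontF : ContinuousOn (fun r : ℝ => 1 / (r * (π - Real.arccos (1 / r))))
      (Set.Icc 1 R) := by
    apply continuousOn_const.div
    · exact continuousOn_id.mul (continuousOn_const.sub hcontA)
    · intro x hx
      obtain ⟨ha0, ha2, hx0⟩ := hbounds x hx
      have : (0:ℝ) < x * (π - Real.arccos (1 / x)) := by
        apply mul_pos hx0; linarith
      exact ne_of_gt this
  have hIntF : IntervalIntegrable (fun r => 1 / (r * (π - Real.arccos (1 / r))))
      MeasureTheory.volume 1 R :=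
    hcontF.intervalIntegrable_of_Icc h1R.le
  -- positivity of ∫ arccos(1/r)
  have hposA : 0 < ∫ r in (1:ℝ)..R, Real.arccos (1 / r) := by
    apply intervalIntegral.intervalIntegral_pos_of_pos_on hIntA _ h1R
    intro x hx
    have hx1 : 1 < x := hx.1
    apply Real.arccos_pos.2
    rw [div_lt_one (by linarith)]; linarith
  constructor
  · exact mul_pos (by positivity) hposA
  -- main inequality
  have hInt1r : IntervalIntegrable (fun r : ℝ => (1/π) * (1/r) +
      (1 / (π ^ 2 * R)) * Real.arccos (1 / r)) MeasureTheory.volume 1 R := by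
    apply IntervalIntegrable.add
    · apply ContinuousOn.intervalIntegrable_of_Icc h1R.le
      apply continuousOn_const.mul
      exact continuousOn_const.div continuousOn_id
        (fun x hx => ne_of_gt (lt_of_lt_of_le one_pos hx.1))
    · exact hIntA.const_mul _
  have hmono : (∫ r in (1:ℝ)..R, ((1/π) * (1/r) +
        (1 / (π ^ 2 * R)) * Real.arccos (1 / r))) ≤
      ∫ r in (1:ℝ)..R, 1 / (r * (π - Real.arccos (1 / r))) := by
    apply intervalIntegral.integral_mono_on h1R.le hInt1r hIntF
    intro r hr
    obtain ⟨ha0, ha2, hr0⟩ := hbounds r hr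
    set a := Real.arccos (1 / r) with hadef
    have hrR : r ≤ R := hr.2
    have hd : π / 2 ≤ π - a := by linarith
    have h1 : (0:ℝ) < π * r := by positivity
    have h2 : (0:ℝ) < π ^ 2 * R := by positivity
    have h3 : (0:ℝ) < r * (π - a) := mul_pos hr0 (by linarith)
    have hL : 1/π*(1/r) + 1/(π^2*R)*a = (π*R + a*r)/(π^2*R*r) := by
      field_simp
    rw [hL, div_le_div_iff₀ (by positivity) h3]
    nlinarith [mul_nonneg (mul_nonneg ha0 hr0.le)
        (add_nonneg (mul_nonneg hπ.le (sub_nonneg.2 hrR)) (mul_nonneg ha0 hr0.le))]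
  have hsplit : (∫ r in (1:ℝ)..R, ((1/π) * (1/r) +
        (1 / (π ^ 2 * R)) * Real.arccos (1 / r))) =
      (1/π) * Real.log R + (1 / (π ^ 2 * R)) * ∫ r in (1:ℝ)..R, Real.arccos (1 / r) := by
    rw [intervalIntegral.integral_add _ (hIntA.const_mul _)]
    · rw [intervalIntegral.integral_const_mul, intervalIntegral.integral_const_mul,
        integral_one_div]
      · norm_num
      · intro h
        rcases Set.mem_uIcc.1 h with h | h <;> linarith [h.1, h.2]
    · apply ContinuousOn.intervalIntegrable_of_Icc h1R.le
      apply continuousOn_const.mul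
      exact continuousOn_const.div continuousOn_id
        (fun x hx => ne_of_gt (lt_of_lt_of_le one_pos hx.1))
  rw [hsplit] at hmono
  linarith
end

section
/- Let u : upper half-plane → ℝ be given by the Poisson integral u(x₀ + iy) = (y/π) ∫_{-∞}^{∞} φ(x) dx/((x - x₀)² + y²) of a nonnegative measurable boundary function φ : ℝ → ℝ. Suppose φ(x) ≤ ε δ₁ for all x ∈ ℝ, and ∫_{|x - x₀| < δ₁} φ(x)/(x - x₀)² dx < ε, where ε, δ₁ > 0. Then for every y > 0, u(x₀ + iy) < y ε (1 + 2/π) and in particular limsup_{y → 0⁺} u(x₀ + iy)/y ≤ ε(1 + 2/π). -/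
open Real MeasureTheory Filter

open Set Topology

lemma tail_integral_Ioi (a d : ℝ) (hd : 0 < d) :
    IntegrableOn (fun x => ((x - a) ^ 2)⁻¹) (Ioi (a + d)) ∧
      (∫ x in Ioi (a + d), ((x - a) ^ 2)⁻¹) = d⁻¹ := by
  have hderiv : ∀ x ∈ Ici (a + d), HasDerivAt (fun x => -(x - a)⁻¹) (((x - a) ^ 2)⁻¹) x := by
    intro x hx
    simp only [mem_Ici] at hx
    have hxa : x - a ≠ 0 := by intro h; nlinarith
    have h1 : HasDerivAt (fun x : ℝ => x - a) 1 x := (hasDerivAt_id x).sub_const a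
    have h2 := ((hasDerivAt_inv hxa).comp x h1).neg
    rw [show ((x - a) ^ 2)⁻¹ = -(-((x - a) ^ 2)⁻¹ * 1) by ring]
    exact h2
  have hpos : ∀ x ∈ Ioi (a + d), (0:ℝ) ≤ ((x - a) ^ 2)⁻¹ := fun x _ => by positivity
  have hlim : Tendsto (fun x : ℝ => -(x - a)⁻¹) atTop (𝓝 0) := by
    have h1 : Tendsto (fun x : ℝ => x - a) atTop atTop :=
      tendsto_atTop_add_const_right _ (-a) tendsto_id
    have := (tendsto_inv_atTop_zero.comp h1).neg
    simpa using this
  constructor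
  · exact integrableOn_Ioi_deriv_of_nonneg' hderiv hpos hlim
  · have := integral_Ioi_of_hasDerivAt_of_nonneg' hderiv hpos hlim
    rw [this]
    simp

lemma tail_integral_Iic (a d : ℝ) (hd : 0 < d) :
    IntegrableOn (fun x => ((x - a) ^ 2)⁻¹) (Iic (a - d)) ∧
      (∫ x in Iic (a - d), ((x - a) ^ 2)⁻¹) = d⁻¹ := by
  have key := tail_integral_Ioi (-a) d hd
  have hfun : ∀ x : ℝ, ((x - a) ^ 2)⁻¹ = (((-x) - (-a)) ^ 2)⁻¹ := by
    intro x; congr 1; ring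
  constructor
  · -- transfer integrability via negation
    have A : MeasurableEmbedding fun x : ℝ => -x :=
      (Homeomorph.neg ℝ).isClosedEmbedding.measurableEmbedding
    have h1 : Integrable (Set.indicator (Ioi (-a + d)) fun x => ((x - (-a)) ^ 2)⁻¹) :=
      (integrable_indicator_iff measurableSet_Ioi).mpr key.1
    have h2 := h1.comp_neg
    have h3 : (fun x => Set.indicator (Ioi (-a + d)) (fun x => ((x - (-a)) ^ 2)⁻¹) (-x))
        = Set.indicator (Iio (a - d)) fun x => ((x - a) ^ 2)⁻¹ := by
      funext x
      by_cases h : x < a - d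
      · rw [Set.indicator_of_mem (by simp [mem_Iio]; linarith), Set.indicator_of_mem (by simp [mem_Ioi]; linarith)]
        congr 1; ring
      · rw [Set.indicator_of_notMem (by simp [mem_Iio]; linarith), Set.indicator_of_notMem (by simp [mem_Ioi] at h ⊢; linarith)]
    rw [h3] at h2
    have h4 : IntegrableOn (fun x => ((x - a) ^ 2)⁻¹) (Iio (a - d)) :=
      (integrable_indicator_iff measurableSet_Iio).mp h2
    exact (integrableOn_Iic_iff_integrableOn_Iio).mpr h4
  · have h2 : (∫ x in Iic (a - d), ((x - a) ^ 2)⁻¹)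
        = ∫ x in Iic (a - d), (fun t => ((t - (-a)) ^ 2)⁻¹) (-x) := by
      refine setIntegral_congr_fun measurableSet_Iic fun x _ => ?_
      simp only
      congr 1; ring
    rw [h2, integral_comp_neg_Iic (a - d) (fun t => ((t - -a) ^ 2)⁻¹)]
    have : -(a - d) = -a + d := by ring
    rw [this, key.2]

/-- Poisson-integral estimate: if the nonnegative boundary function `φ` is bounded by `ε δ₁`
and `∫_{|x-x₀|<δ₁} φ(x)/(x-x₀)² dx < ε`, then the Poisson extension satisfies
`u(x₀+iy) < y ε (1 + 2/π)` for all `y > 0`, and `limsup_{y→0⁺} u(x₀+iy)/y ≤ ε(1+2/π)`. -/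
theorem poisson_estimate (x₀ ε δ₁ : ℝ) (hε : 0 < ε) (hδ₁ : 0 < δ₁)
    (φ : ℝ → ℝ) (hφm : Measurable φ) (hφ0 : ∀ x, 0 ≤ φ x)
    (hφb : ∀ x, φ x ≤ ε * δ₁)
    (hint : IntegrableOn (fun x => φ x / (x - x₀) ^ 2) {x | |x - x₀| < δ₁})
    (hsmall : (∫ x in {x | |x - x₀| < δ₁}, φ x / (x - x₀) ^ 2) < ε)
    (u : ℝ → ℝ)
    (hu : ∀ y, u y = (y / π) * ∫ x, φ x / ((x - x₀) ^ 2 + y ^ 2)) :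
    (∀ y : ℝ, 0 < y → u y < y * ε * (1 + 2 / π)) ∧
      limsup (fun y => u y / y) (nhdsWithin 0 (Set.Ioi 0)) ≤ ε * (1 + 2 / π) := by
  set S : Set ℝ := {x | |x - x₀| < δ₁} with hS_def
  have hSm : MeasurableSet S :=
    (measurable_id.sub_const x₀).abs measurableSet_Iio
  -- the complement set
  have hScompl : Sᶜ = Iic (x₀ - δ₁) ∪ Ici (x₀ + δ₁) := by
    ext x
    simp only [hS_def, mem_compl_iff, mem_setOf_eq, not_lt, mem_union, mem_Iic, mem_Ici,
      le_abs]
    constructor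
    · rintro (h | h)
      · right; linarith
      · left; linarith
    · rintro (h | h)
      · right; linarith
      · left; linarith
  have hIoi := tail_integral_Ioi x₀ δ₁ hδ₁
  have hIic := tail_integral_Iic x₀ δ₁ hδ₁
  have hIciInt : IntegrableOn (fun x => ((x - x₀) ^ 2)⁻¹) (Ici (x₀ + δ₁)) :=
    Iff.mpr integrableOn_Ici_iff_integrableOn_Ioi hIoi.1
  have hdisj : Disjoint (Iic (x₀ - δ₁)) (Ici (x₀ + δ₁)) :=
    Iic_disjoint_Ici.mpr (by intro h; linarith)
  have htailInt : IntegrableOn (fun x => ((x - x₀) ^ 2)⁻¹) Sᶜ := by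
    rw [hScompl]; exact hIic.1.union hIciInt
  have htailVal : (∫ x in Sᶜ, ((x - x₀) ^ 2)⁻¹) = 2 * δ₁⁻¹ := by
    rw [hScompl, setIntegral_union hdisj measurableSet_Ici hIic.1 hIciInt,
      integral_Ici_eq_integral_Ioi, hIic.2, hIoi.2]
    ring
  -- main pointwise estimate
  have main : ∀ y : ℝ, 0 < y →
      (∫ x, φ x / ((x - x₀) ^ 2 + y ^ 2)) < 3 * ε ∧
      0 ≤ ∫ x, φ x / ((x - x₀) ^ 2 + y ^ 2) := by
    intro y hy
    set f : ℝ → ℝ := fun x => φ x / ((x - x₀) ^ 2 + y ^ 2) with hf_def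
    have hden : ∀ x : ℝ, 0 < (x - x₀) ^ 2 + y ^ 2 := fun x => by positivity
    have hmeas : Measurable f :=
      hφm.div (((measurable_id.sub_const x₀).pow_const 2).add_const _)
    -- integrability of f
    have hdom : Integrable (fun x : ℝ => ((x - x₀) ^ 2 + y ^ 2)⁻¹) := by
      have h1 : Integrable (fun x : ℝ => (1 + (x / y) ^ 2)⁻¹) :=
        integrable_inv_one_add_sq.comp_div hy.ne'
      have h2 : Integrable (fun x : ℝ => (1 + ((x - x₀) / y) ^ 2)⁻¹) :=
        h1.comp_sub_right x₀
      refine (h2.const_mul ((y ^ 2)⁻¹)).congr (Eventually.of_forall fun x => ?_)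
      have : (x - x₀) ^ 2 + y ^ 2 = y ^ 2 * (1 + ((x - x₀) / y) ^ 2) := by
        field_simp; ring
      show (y ^ 2)⁻¹ * (1 + ((x - x₀) / y) ^ 2)⁻¹ = ((x - x₀) ^ 2 + y ^ 2)⁻¹
      rw [this, mul_inv]
    have hfInt : Integrable f := by
      refine (hdom.const_mul (ε * δ₁)).mono hmeas.aestronglyMeasurable
        (Eventually.of_forall fun x => ?_)
      have h1 : 0 ≤ f x := div_nonneg (hφ0 x) (hden x).le
      have h2 : f x ≤ ε * δ₁ * ((x - x₀) ^ 2 + y ^ 2)⁻¹ := by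
        rw [hf_def]
        calc φ x / ((x - x₀) ^ 2 + y ^ 2) ≤ (ε * δ₁) / ((x - x₀) ^ 2 + y ^ 2) := by
              gcongr; exact hφb x
          _ = ε * δ₁ * ((x - x₀) ^ 2 + y ^ 2)⁻¹ := by rw [div_eq_mul_inv]
      rw [Real.norm_eq_abs, Real.norm_eq_abs, abs_of_nonneg h1, abs_of_nonneg (by positivity)]
      exact h2
    have hnonneg : 0 ≤ ∫ x, f x :=
      integral_nonneg fun x => div_nonneg (hφ0 x) (hden x).le
    -- split
    have hsplit : (∫ x, f x) = (∫ x in S, f x) + ∫ x in Sᶜ, f x :=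
      (integral_add_compl hSm hfInt).symm
    -- near part
    have hnear : (∫ x in S, f x) < ε := by
      refine lt_of_le_of_lt ?_ hsmall
      refine integral_mono_ae (hfInt.integrableOn) hint ?_
      have hx0 : ∀ᵐ x ∂(volume.restrict S), x ≠ x₀ := by
        refine ae_restrict_of_ae ?_
        rw [ae_iff]
        convert Real.volume_singleton (a := x₀) using 2
        ext x; simp
      filter_upwards [hx0] with x hx
      have hne : x - x₀ ≠ 0 := sub_ne_zero.mpr hx
      have hsq : 0 < (x - x₀) ^ 2 := by positivity
      have : (x - x₀) ^ 2 ≤ (x - x₀) ^ 2 + y ^ 2 := by nlinarith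
      exact div_le_div_of_nonneg_left (hφ0 x) hsq this |>.trans_eq rfl
    -- far part
    have hfar : (∫ x in Sᶜ, f x) ≤ 2 * ε := by
      have hb : ∀ x ∈ Sᶜ, f x ≤ ε * δ₁ * ((x - x₀) ^ 2)⁻¹ := by
        intro x hx
        have hax : δ₁ ≤ |x - x₀| := not_lt.mp hx
        have hsq : δ₁ ^ 2 ≤ (x - x₀) ^ 2 := by
          have := sq_abs (x - x₀); nlinarith [abs_nonneg (x - x₀)]
        have hpos : 0 < (x - x₀) ^ 2 := by nlinarith
        calc f x = φ x / ((x - x₀) ^ 2 + y ^ 2) := rfl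
          _ ≤ (ε * δ₁) / ((x - x₀) ^ 2) := by
              gcongr
              · exact hφb x
              · nlinarith
          _ = ε * δ₁ * ((x - x₀) ^ 2)⁻¹ := by rw [div_eq_mul_inv]
      calc (∫ x in Sᶜ, f x)
          ≤ ∫ x in Sᶜ, ε * δ₁ * ((x - x₀) ^ 2)⁻¹ :=
            setIntegral_mono_on hfInt.integrableOn (htailInt.const_mul _) hSm.compl hb
        _ = ε * δ₁ * ∫ x in Sᶜ, ((x - x₀) ^ 2)⁻¹ := by rw [integral_const_mul]
        _ = ε * δ₁ * (2 * δ₁⁻¹) := by rw [htailVal]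
        _ = 2 * ε := by field_simp
    refine ⟨?_, hnonneg⟩
    rw [hsplit]
    linarith
  have hmain : ∀ y : ℝ, 0 < y → u y < y * ε * (1 + 2 / π) := by
    intro y hy
    have h := main y hy
    rw [hu y]
    have hyπ : 0 < y / π := div_pos hy pi_pos
    have h1 : (y / π) * ∫ x, φ x / ((x - x₀) ^ 2 + y ^ 2) < (y / π) * (3 * ε) :=
      mul_lt_mul_of_pos_left h.1 hyπ
    refine h1.trans_le ?_
    have h4 : 1 / π ≤ 1 := by rw [div_le_one pi_pos]; linarith [pi_gt_three]
    have h3 : 3 / π ≤ 1 + 2 / π := by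
      have : 3 / π = 1 / π + 2 / π := by ring
      linarith
    calc (y / π) * (3 * ε) = y * ε * (3 / π) := by ring
      _ ≤ y * ε * (1 + 2 / π) := by
          have hyε : 0 ≤ y * ε := by positivity
          exact mul_le_mul_of_nonneg_left h3 hyε
  refine ⟨hmain, ?_⟩
  have hev : ∀ᶠ y in nhdsWithin (0:ℝ) (Set.Ioi 0), u y / y ≤ ε * (1 + 2 / π) := by
    filter_upwards [self_mem_nhdsWithin] with y hy
    have hy : (0:ℝ) < y := hy
    have := hmain y hy
    rw [div_le_iff₀ hy]
    nlinarith
  have hev0 : ∀ᶠ y in nhdsWithin (0:ℝ) (Set.Ioi 0), 0 ≤ u y / y := by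
    filter_upwards [self_mem_nhdsWithin] with y hy
    have hy : (0:ℝ) < y := hy
    have h := (main y hy).2
    rw [hu y]
    positivity
  exact limsup_le_of_le (isCoboundedUnder_le_of_eventually_le _ hev0) hev
end
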